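/- Let d ≥ 2, let X^1,…,X^d be sets, let k^j : X^j × X^j → ℝ for j ∈ {1,…,d}, let H be a real inner product space, and let Φ : X^1 × ⋯ × X^d → H satisfy ⟨Φ(x), Φ(y)⟩ = Π_{j=1}^d k^j(x^j, y^j) for all x, y. Then for every dataset X of size n, ‖ n^{-1} Σ_{i=1}^n Φ(X_i) − n^{-d} Σ_{i_1,…,i_d=1}^n Φ(X^1_{i_1},…,X^d_{i_d}) ‖^2 = V(X); in particular V(X) ≥ 0. -/

import Mathlib

open Finset

noncomputable section

/-- Squared empirical dHSIC (V-statistic) of a dataset of size `n`. -/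
def Vstat {d n : ℕ} {X : Fin d → Type*} (k : ∀ j, X j → X j → ℝ)
    (D : Fin n → ∀ j, X j) : ℝ :=
  ((n : ℝ) ^ 2)⁻¹ * ∑ i₁ : Fin n, ∑ i₂ : Fin n, ∏ j, k j (D i₁ j) (D i₂ j)
    + ((n : ℝ) ^ (2 * d))⁻¹ *
        ∑ a : Fin d → Fin n, ∑ b : Fin d → Fin n, ∏ j, k j (D (a j) j) (D (b j) j)
    - 2 * ((n : ℝ) ^ (d + 1))⁻¹ *
        ∑ i₁ : Fin n, ∑ c : Fin d → Fin n, ∏ j, k j (D i₁ j) (D (c j) j)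

/-- the squared empirical dHSIC is the squared distance between
the empirical mean embedding of the joint distribution and that of the product
of the marginals, for any feature map realizing the product kernel. -/
theorem Vstat_eq_norm_sq_mean_embedding
    {d n : ℕ} (hd : 2 ≤ d)
    (X : Fin d → Type*) (k : ∀ j, X j → X j → ℝ)
    (H : Type*) [NormedAddCommGroup H] [InnerProductSpace ℝ H]
    (Φ : (∀ j, X j) → H)
    (hΦ : ∀ x y : ∀ j, X j, (inner ℝ (Φ x) (Φ y) : ℝ) = ∏ j, k j (x j) (y j))
    (D : Fin n → ∀ j, X j) :
    ‖(n : ℝ)⁻¹ • ∑ i : Fin n, Φ (D i)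
        - ((n : ℝ) ^ d)⁻¹ • ∑ c : Fin d → Fin n, Φ (fun j => D (c j) j)‖ ^ 2
      = Vstat k D ∧ 0 ≤ Vstat k D := by
  have key : ‖(n : ℝ)⁻¹ • ∑ i : Fin n, Φ (D i)
        - ((n : ℝ) ^ d)⁻¹ • ∑ c : Fin d → Fin n, Φ (fun j => D (c j) j)‖ ^ 2
      = Vstat k D := by
    have hns : ∀ v : H, ‖v‖ ^ 2 = (inner ℝ v v : ℝ) :=
      fun v => (real_inner_self_eq_norm_sq v).symm
    rw [norm_sub_sq_real, hns, hns]
    simp only [inner_sum, sum_inner, real_inner_smul_left, real_inner_smul_right, hΦ,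
      Finset.mul_sum, ← Finset.sum_mul]
    simp only [← Finset.mul_sum]
    unfold Vstat
    rw [Finset.sum_comm (s := (Finset.univ : Finset (Fin n)))
      (t := (Finset.univ : Finset (Fin d → Fin n)))
      (f := fun i₁ c => ∏ j, k j (D i₁ j) (D (c j) j))]
    rw [show (∑ i₁ : Fin n, ∑ i₂ : Fin n, ∏ j, k j (D i₁ j) (D i₂ j))
        = ∑ i₂ : Fin n, ∑ i₁ : Fin n, ∏ j, k j (D i₁ j) (D i₂ j) from Finset.sum_comm]
    rw [show (∑ a : Fin d → Fin n, ∑ b : Fin d → Fin n, ∏ j, k j (D (a j) j) (D (b j) j))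
        = ∑ b : Fin d → Fin n, ∑ a : Fin d → Fin n, ∏ j, k j (D (a j) j) (D (b j) j)
        from Finset.sum_comm]
    ring
  exact ⟨key, key ▸ sq_nonneg _⟩

end
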